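/- Let k be a field complete with respect to a nonarchimedean multiplicative absolute value |·|, and let P ⊆ ℝ^n be a nonempty pointed rational polyhedron with recession cone σ = Recc(P) and S_σ = σ∨ ∩ ℤ^n. Define k⟨U_P⟩ to be the set of functions a : S_σ → k such that for every v ∈ P, |a_u| e^{⟨u,v⟩} → 0 as ‖u‖ → ∞ (i.e. for every ε > 0 only finitely many u ∈ S_σ satisfy |a_u| e^{⟨u,v⟩} ≥ ε). Then: (a) for a, b ∈ k⟨U_P⟩ and each u ∈ S_σ, the family (a_{u′} b_{u″})_{u′+u″ = u, u′,u″ ∈ S_σ} is summable in k and the convolution (a*b)_u := ∑_{u′+u″=u} a_{u′} b_{u″} again lies in k⟨U_P⟩, making k⟨U_P⟩ a commutative k-algebra; (b) |a|_P := max_{u ∈ S_σ, v ∈ Vert(P)} |a_u| e^{⟨u,v⟩} is a well-defined nonarchimedean norm on k⟨U_P⟩ with |a*b|_P ≤ |a|_P |b|_P and |c·a|_P = |c| |a|_P for c ∈ k; (c) k⟨U_P⟩ is complete with respect to |·|_P. -/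

import Mathlib

open Topology

noncomputable section

/-- The standard pairing `⟨u, v⟩ = ∑ i, u i * v i` on `ℝⁿ`. -/
def dotp {n : ℕ} (u v : Fin n → ℝ) : ℝ := ∑ i, u i * v i

/-- The polyhedral cone generated by the vectors `v 0, …, v (s-1)`. -/
def coneOf {n s : ℕ} (v : Fin s → (Fin n → ℝ)) : Set (Fin n → ℝ) :=
  {x | ∃ lam : Fin s → ℝ, (∀ j, 0 ≤ lam j) ∧ x = ∑ j, lam j • v j}

/-- A set is a polyhedral cone if it is finitely generated. -/
def IsPolyCone {n : ℕ} (σ : Set (Fin n → ℝ)) : Prop :=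
  ∃ (s : ℕ) (v : Fin s → (Fin n → ℝ)), σ = coneOf v

/-- The polar cone `σ∨ = {u | ⟨u,v⟩ ≤ 0 ∀ v ∈ σ}`. -/
def polarCone {n : ℕ} (σ : Set (Fin n → ℝ)) : Set (Fin n → ℝ) :=
  {u | ∀ v ∈ σ, dotp u v ≤ 0}

/-- A cone is pointed if it contains no nonzero linear subspace. -/
def IsPointed {n : ℕ} (σ : Set (Fin n → ℝ)) : Prop :=
  ∀ W : Submodule ℝ (Fin n → ℝ), (W : Set (Fin n → ℝ)) ⊆ σ → W = ⊥

/-- The partial compactification `N_ℝ(σ)`: the set of `ℝ₊`-equivariant monoid morphisms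
`φ : σ∨ → ℝ ∪ {-∞}`, realized as `EReal`-valued functions on `σ∨` never taking the
value `+∞`.  (In `EReal` one has `(0 : EReal) * ⊥ = 0`, which is the convention
`0 · (-∞) = 0`.)  It is topologized as a subspace of the product
`σ∨ → EReal`, i.e. with the topology of pointwise convergence. -/
def NRc {n : ℕ} (σ : Set (Fin n → ℝ)) : Set (↥(polarCone σ) → EReal) :=
  {φ | (∀ u, φ u ≠ ⊤) ∧
    (∀ (u u' : ↥(polarCone σ)) (h : (u : Fin n → ℝ) + (u' : Fin n → ℝ) ∈ polarCone σ),
      φ ⟨(u : Fin n → ℝ) + (u' : Fin n → ℝ), h⟩ = φ u + φ u') ∧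
    (∀ (c : ℝ), 0 ≤ c → ∀ (u : ↥(polarCone σ)) (h : c • (u : Fin n → ℝ) ∈ polarCone σ),
      φ ⟨c • (u : Fin n → ℝ), h⟩ = (c : EReal) * φ u)}

/-- The canonical map `N_ℝ → (σ∨ → EReal)`, `v ↦ (u ↦ ⟨u,v⟩)`; its image lies in `N_ℝ(σ)`. -/
def jmap {n : ℕ} (σ : Set (Fin n → ℝ)) (v : Fin n → ℝ) : ↥(polarCone σ) → EReal :=
  fun u => ((dotp (u : Fin n → ℝ) v : ℝ) : EReal)


/-- The real vector associated to an integer vector. -/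
def intCastVec {n : ℕ} (u : Fin n → ℤ) : Fin n → ℝ := fun i => (u i : ℝ)

/-- The monoid `S_σ = σ∨ ∩ ℤⁿ` of lattice points of the polar cone. -/
def Ssigma {n : ℕ} (σ : Set (Fin n → ℝ)) : AddSubmonoid (Fin n → ℤ) where
  carrier := {u | intCastVec u ∈ polarCone σ}
  zero_mem' := by
    intro v hv
    simp [dotp, intCastVec]
  add_mem' := by
    intro a b ha hb v hv
    have h1 := ha v hv
    have h2 := hb v hv
    have key : dotp (intCastVec (a + b)) v = dotp (intCastVec a) v + dotp (intCastVec b) v := by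
      simp [intCastVec, dotp, add_mul, Finset.sum_add_distrib]
    simpa [key] using add_nonpos h1 h2

/-- The set of vertices of `P`: points of `P` that are the unique maximizer on `P` of
some linear functional (zero-dimensional faces). -/
def vertices {n : ℕ} (P : Set (Fin n → ℝ)) : Set (Fin n → ℝ) :=
  {x | x ∈ P ∧ ∃ c : Fin n → ℝ, ∀ y ∈ P, y ≠ x → dotp c y < dotp c x}

/-- The underlying set of `k⟨U_P⟩`: families `a : S_σ → k` such that for every `v ∈ P`,
`‖a_u‖ e^{⟨u,v⟩} → 0` as `‖u‖ → ∞`, i.e. for every `ε > 0` only finitely many `u ∈ S_σ`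
satisfy `‖a_u‖ e^{⟨u,v⟩} ≥ ε`. -/
def KUP (k : Type*) [NormedField k] {n : ℕ} (σ P : Set (Fin n → ℝ)) :
    Set (↥(Ssigma σ) → k) :=
  {a | ∀ v ∈ P, ∀ ε > (0 : ℝ),
    {u : ↥(Ssigma σ) | ε ≤ ‖a u‖ * Real.exp (dotp (intCastVec (u : Fin n → ℤ)) v)}.Finite}

/-- The convolution product `(a * b)_u = ∑_{u' + u'' = u} a_{u'} b_{u''}` (an
unconditional sum in the complete field `k`). -/
def convKU {k : Type*} [NormedField k] [CompleteSpace k] {n : ℕ} {σ : Set (Fin n → ℝ)}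
    (a b : ↥(Ssigma σ) → k) : ↥(Ssigma σ) → k :=
  fun u => ∑' q : {q : ↥(Ssigma σ) × ↥(Ssigma σ) // q.1 + q.2 = u},
    a (q : ↥(Ssigma σ) × ↥(Ssigma σ)).1 * b (q : ↥(Ssigma σ) × ↥(Ssigma σ)).2

/-- The norm `|a|_P = max_{u ∈ S_σ, v ∈ Vert P} ‖a_u‖ e^{⟨u,v⟩}` (the theorem below
asserts that this supremum is a maximum). -/
def normP {k : Type*} [NormedField k] {n : ℕ} (σ P : Set (Fin n → ℝ))
    (a : ↥(Ssigma σ) → k) : ℝ :=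
  sSup {x : ℝ | ∃ u : ↥(Ssigma σ), ∃ v ∈ vertices P,
    x = ‖a u‖ * Real.exp (dotp (intCastVec (u : Fin n → ℤ)) v)}

open Classical in
/-- The unit of `k⟨U_P⟩`: the indicator function of `0 ∈ S_σ`. -/
def deltaZero (k : Type*) [NormedField k] {n : ℕ} (σ : Set (Fin n → ℝ)) :
    ↥(Ssigma σ) → k :=
  fun u => if u = 0 then 1 else 0

namespace Stmt12Aux

open Set

/-! ### dotp basics -/

lemma dotp_comm {n : ℕ} (u v : Fin n → ℝ) : dotp u v = dotp v u := by
  unfold dotp; exact Finset.sum_congr rfl fun i _ => mul_comm _ _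

lemma dotp_add_left {n : ℕ} (u u' v : Fin n → ℝ) :
    dotp (u + u') v = dotp u v + dotp u' v := by
  unfold dotp; rw [← Finset.sum_add_distrib]
  exact Finset.sum_congr rfl fun i _ => by simp [add_mul]

lemma dotp_add_right {n : ℕ} (u v v' : Fin n → ℝ) :
    dotp u (v + v') = dotp u v + dotp u v' := by
  rw [dotp_comm, dotp_add_left, dotp_comm v, dotp_comm v']

lemma dotp_smul_left {n : ℕ} (c : ℝ) (u v : Fin n → ℝ) :
    dotp (c • u) v = c * dotp u v := by
  unfold dotp; rw [Finset.mul_sum]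
  exact Finset.sum_congr rfl fun i _ => by simp [mul_assoc]

lemma dotp_smul_right {n : ℕ} (c : ℝ) (u v : Fin n → ℝ) :
    dotp u (c • v) = c * dotp u v := by
  rw [dotp_comm, dotp_smul_left, dotp_comm]

lemma dotp_zero_left {n : ℕ} (v : Fin n → ℝ) : dotp 0 v = 0 := by
  unfold dotp; simp

lemma dotp_zero_right {n : ℕ} (v : Fin n → ℝ) : dotp v 0 = 0 := by
  rw [dotp_comm, dotp_zero_left]

lemma dotp_neg_right {n : ℕ} (u v : Fin n → ℝ) : dotp u (-v) = -dotp u v := by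
  have := dotp_smul_right (-1 : ℝ) u v
  simpa using this

lemma dotp_neg_left {n : ℕ} (u v : Fin n → ℝ) : dotp (-u) v = -dotp u v := by
  rw [dotp_comm, dotp_neg_right, dotp_comm]

lemma dotp_sub_right {n : ℕ} (u v v' : Fin n → ℝ) :
    dotp u (v - v') = dotp u v - dotp u v' := by
  rw [sub_eq_add_neg, dotp_add_right, dotp_neg_right]; ring

lemma dotp_sum_left {n : ℕ} {ι : Type*} (s : Finset ι) (f : ι → (Fin n → ℝ))
    (v : Fin n → ℝ) : dotp (∑ i ∈ s, f i) v = ∑ i ∈ s, dotp (f i) v := by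
  classical
  induction s using Finset.induction_on with
  | empty => simp [dotp_zero_left]
  | insert a s' h ih =>
                   rw [Finset.sum_insert h, dotp_add_left, ih, Finset.sum_insert h]

lemma dotp_self_eq_zero {n : ℕ} {v : Fin n → ℝ} (h : dotp v v = 0) : v = 0 := by
  have : ∀ i ∈ Finset.univ, v i * v i = 0 := by
    intro i _
    have hnn : ∀ j ∈ (Finset.univ : Finset (Fin n)), 0 ≤ v j * v j :=
      fun j _ => mul_self_nonneg _
    exact (Finset.sum_eq_zero_iff_of_nonneg hnn).mp h i (Finset.mem_univ i)
  funext i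
  exact mul_self_eq_zero.mp (this i (Finset.mem_univ i))

lemma intCastVec_add {n : ℕ} (u u' : Fin n → ℤ) :
    intCastVec (u + u') = intCastVec u + intCastVec u' := by
  funext i; simp [intCastVec]

lemma intCastVec_zero {n : ℕ} : intCastVec (0 : Fin n → ℤ) = 0 := by
  funext i; simp [intCastVec]

end Stmt12Aux
namespace Stmt12Aux
open Set Filter

section NA
variable {k : Type*} [NormedField k] (hna : IsNonarchimedean (fun x : k => ‖x‖))

include hna in
lemma na_finsetSum {ι : Type*} (s : Finset ι) (f : ι → k) {C : ℝ} (hC : 0 ≤ C)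
    (h : ∀ i ∈ s, ‖f i‖ ≤ C) : ‖∑ i ∈ s, f i‖ ≤ C := by
  classical
  induction s using Finset.induction_on with
  | empty => simpa using hC
  | insert a s' hmem ih =>
      rw [Finset.sum_insert hmem]
      refine le_trans (hna _ _) (max_le (h a (Finset.mem_insert_self _ _)) ?_)
      exact ih fun i hi => h i (Finset.mem_insert_of_mem hi)

include hna in
lemma na_summable [CompleteSpace k] {ι : Type*} (f : ι → k)
    (h : ∀ ε > (0 : ℝ), {i | ε ≤ ‖f i‖}.Finite) : Summable f := by
  classical
  rw [summable_iff_vanishing]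
  intro e he
  obtain ⟨ε, hε, hball⟩ := Metric.mem_nhds_iff.mp he
  refine ⟨(h (ε / 2) (by linarith)).toFinset, fun t ht => ?_⟩
  apply hball
  rw [Metric.mem_ball, dist_zero_right]
  refine lt_of_le_of_lt (na_finsetSum hna t f (C := ε/2) (by linarith) fun i hi => ?_) (by linarith)
  by_contra hcon
  push_neg at hcon
  have : i ∈ (h (ε / 2) (by linarith)).toFinset := by
    simp only [Set.Finite.mem_toFinset, Set.mem_setOf_eq]; linarith
  exact (Finset.disjoint_left.mp ht hi) this

include hna in
lemma na_tsum_le [CompleteSpace k] {ι : Type*} {f : ι → k} (hf : Summable f) {C : ℝ}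
    (hC : 0 ≤ C) (h : ∀ i, ‖f i‖ ≤ C) : ‖∑' i, f i‖ ≤ C := by
  have htend := hf.hasSum
  have : Filter.Tendsto (fun s : Finset ι => ‖∑ i ∈ s, f i‖) atTop (nhds ‖∑' i, f i‖) :=
    (continuous_norm.tendsto _).comp htend
  exact le_of_tendsto this (Filter.Eventually.of_forall fun s =>
    na_finsetSum hna s f hC fun i _ => h i)

end NA

/-- A nonempty set of nonnegative reals whose `≥ ε` parts are all finite has a
greatest element, namely its `sSup`. -/
lemma exists_isGreatest_of_finite_large (S : Set ℝ) (hne : S.Nonempty)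
    (h0 : ∀ x ∈ S, 0 ≤ x) (hfin : ∀ ε > (0 : ℝ), (S ∩ Set.Ici ε).Finite) :
    IsGreatest S (sSup S) := by
  classical
  by_cases hpos : ∃ x ∈ S, 0 < x
  · obtain ⟨x₀, hx₀S, hx₀⟩ := hpos
    set G := S ∩ Set.Ici x₀ with hG
    have hGfin : G.Finite := hfin x₀ hx₀
    have hGne : G.Nonempty := ⟨x₀, hx₀S, le_refl x₀⟩
    have hGne' : hGfin.toFinset.Nonempty := by
      rwa [Set.Finite.toFinset_nonempty]
    set m := hGfin.toFinset.max' hGne' with hm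
    have hmG : m ∈ G := by
      have := hGfin.toFinset.max'_mem hGne'
      rwa [Set.Finite.mem_toFinset] at this
    have hgr : IsGreatest S m := by
      constructor
      · exact hmG.1
      · intro y hy
        by_cases hyx : x₀ ≤ y
        · exact hGfin.toFinset.le_max' y (by rw [Set.Finite.mem_toFinset]; exact ⟨hy, hyx⟩)
        · push_neg at hyx
          exact le_trans hyx.le (le_trans hmG.2 (hGfin.toFinset.le_max' m
            (by rwa [Set.Finite.mem_toFinset])))
    rwa [hgr.csSup_eq]
  · push_neg at hpos
    have hS0 : S = {0} := by
      apply Set.eq_singleton_iff_nonempty_unique_mem.mpr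
      exact ⟨hne, fun x hx => le_antisymm (hpos x hx) (h0 x hx)⟩
    rw [hS0, csSup_singleton]
    exact isGreatest_singleton

end Stmt12Aux
namespace Stmt12Aux
open Set

section Poly
variable {n r : ℕ} {uu : Fin r → (Fin n → ℤ)} {aa : Fin r → ℝ} {P σ : Set (Fin n → ℝ)}

lemma inj_of_pointed (hσ : σ = {v | ∀ i, dotp (intCastVec (uu i)) v ≤ 0})
    (hpt : IsPointed σ) {d : Fin n → ℝ} (hd : ∀ i, dotp (intCastVec (uu i)) d = 0) :
    d = 0 := by
  set W : Submodule ℝ (Fin n → ℝ) :=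
    { carrier := {x | ∀ i, dotp (intCastVec (uu i)) x = 0}
      zero_mem' := fun i => dotp_zero_right _
      add_mem' := fun hx hy i => by rw [dotp_add_right]; rw [hx i, hy i]; ring
      smul_mem' := fun c x hx => fun i => by rw [dotp_smul_right, hx i, mul_zero] } with hW
  have hWσ : (W : Set (Fin n → ℝ)) ⊆ σ := by
    intro x hx
    rw [hσ]
    exact fun i => le_of_eq (hx i)
  have hbot := hpt W hWσ
  have hdW : d ∈ W := hd
  rw [hbot] at hdW
  simpa using hdW

open Classical in
/-- The set of constraints that are tight at `v`. -/
def tightSet (uu : Fin r → (Fin n → ℤ)) (aa : Fin r → ℝ) (v : Fin n → ℝ) : Finset (Fin r) :=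
  Finset.univ.filter (fun i => dotp (intCastVec (uu i)) v = aa i)

/-- The tight constraints determine the point. -/
def Rigid (uu : Fin r → (Fin n → ℤ)) (T : Finset (Fin r)) : Prop :=
  ∀ d : Fin n → ℝ, (∀ i ∈ T, dotp (intCastVec (uu i)) d = 0) → d = 0

lemma mem_tightSet {v : Fin n → ℝ} {i : Fin r} :
    i ∈ tightSet uu aa v ↔ dotp (intCastVec (uu i)) v = aa i := by
  classical
  simp [tightSet]

lemma memP (hP : P = {v | ∀ i, dotp (intCastVec (uu i)) v ≤ aa i}) {v : Fin n → ℝ}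
    (hv : v ∈ P) (i : Fin r) : dotp (intCastVec (uu i)) v ≤ aa i := by
  rw [hP] at hv; exact hv i

lemma vertex_of_rigid (hP : P = {v | ∀ i, dotp (intCastVec (uu i)) v ≤ aa i})
    {v : Fin n → ℝ} (hv : v ∈ P) (hR : Rigid uu (tightSet uu aa v)) :
    v ∈ vertices P := by
  classical
  refine ⟨hv, ∑ i ∈ tightSet uu aa v, intCastVec (uu i), fun y hy hyv => ?_⟩
  rw [dotp_sum_left, dotp_sum_left]
  have hle : ∀ i ∈ tightSet uu aa v,
      dotp (intCastVec (uu i)) y ≤ dotp (intCastVec (uu i)) v := by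
    intro i hi
    rw [mem_tightSet.mp hi]
    exact memP hP hy i
  have hex : ∃ i ∈ tightSet uu aa v,
      dotp (intCastVec (uu i)) y < dotp (intCastVec (uu i)) v := by
    by_contra hcon
    push_neg at hcon
    have horth : ∀ i ∈ tightSet uu aa v, dotp (intCastVec (uu i)) (y - v) = 0 := by
      intro i hi
      have heq := le_antisymm (hle i hi) (hcon i hi)
      rw [dotp_sub_right, heq, sub_self]
    exact hyv (sub_eq_zero.mp (hR (y - v) horth))
  exact Finset.sum_lt_sum hle hex

lemma rigid_of_vertex (hP : P = {v | ∀ i, dotp (intCastVec (uu i)) v ≤ aa i})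
    {v : Fin n → ℝ} (hv : v ∈ vertices P) : Rigid uu (tightSet uu aa v) := by
  classical
  by_contra hcon
  unfold Rigid at hcon
  push_neg at hcon
  obtain ⟨d, hdorth, hd0⟩ := hcon
  obtain ⟨hvP, c, hc⟩ := hv
  set g : Fin r → ℝ := fun i =>
    if dotp (intCastVec (uu i)) v = aa i then 1
    else (aa i - dotp (intCastVec (uu i)) v) / (|dotp (intCastVec (uu i)) d| + 1) with hg
  have hgpos : ∀ i, 0 < g i := by
    intro i
    rw [hg]
    dsimp only
    split
    · exact one_pos
    · rename_i hne
      apply div_pos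
      · have := memP hP hvP i
        cases lt_or_eq_of_le this with
        | inl h => linarith
        | inr h => exact absurd h hne
      · positivity
  set t : ℝ := (insert (1:ℝ) (Finset.univ.image g)).min' (by simp) with ht
  have htmem := (insert (1:ℝ) (Finset.univ.image g)).min'_mem (by simp)
  have htpos : 0 < t := by
    rcases Finset.mem_insert.mp htmem with h | h
    · rw [ht, h]; exact one_pos
    · obtain ⟨i, _, hgi⟩ := Finset.mem_image.mp h
      rw [ht, ← hgi]; exact hgpos i
  have htle : ∀ i, t ≤ g i := fun i =>
    Finset.min'_le _ _ (Finset.mem_insert_of_mem (Finset.mem_image_of_mem g (Finset.mem_univ i)))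
  have hstep : ∀ s : ℝ, |s| ≤ t → v + s • d ∈ P := by
    intro s hs
    rw [hP]
    intro i
    rw [dotp_add_right, dotp_smul_right]
    by_cases hi : dotp (intCastVec (uu i)) v = aa i
    · have h0 : dotp (intCastVec (uu i)) d = 0 := hdorth i (mem_tightSet.mpr hi)
      rw [h0, mul_zero, add_zero, hi]
    · have hlt : dotp (intCastVec (uu i)) v < aa i :=
        lt_of_le_of_ne (memP hP hvP i) hi
      have hgi : g i = (aa i - dotp (intCastVec (uu i)) v) / (|dotp (intCastVec (uu i)) d| + 1) := by
        rw [hg]; dsimp only; rw [if_neg hi]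
      have hden : (0:ℝ) < |dotp (intCastVec (uu i)) d| + 1 := by positivity
      have hkey : g i * (|dotp (intCastVec (uu i)) d| + 1) = aa i - dotp (intCastVec (uu i)) v := by
        rw [hgi, div_mul_cancel₀ _ hden.ne']
      have h1 : s * dotp (intCastVec (uu i)) d ≤ |s| * |dotp (intCastVec (uu i)) d| := by
        calc s * dotp (intCastVec (uu i)) d ≤ |s * dotp (intCastVec (uu i)) d| := le_abs_self _
        _ = |s| * |dotp (intCastVec (uu i)) d| := abs_mul _ _
      have h2 : |s| * |dotp (intCastVec (uu i)) d| ≤ t * (|dotp (intCastVec (uu i)) d| + 1) := by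
        have := abs_nonneg (dotp (intCastVec (uu i)) d)
        have := abs_nonneg s
        nlinarith
      have h3 : t * (|dotp (intCastVec (uu i)) d| + 1) ≤ g i * (|dotp (intCastVec (uu i)) d| + 1) :=
        mul_le_mul_of_nonneg_right (htle i) hden.le
      linarith
  have hne1 : v + t • d ≠ v := by
    intro h
    have h' := sub_eq_zero.mpr h
    rw [add_sub_cancel_left] at h'
    exact hd0 ((smul_eq_zero.mp h').resolve_left htpos.ne')
  have hne2 : v + (-t) • d ≠ v := by
    intro h
    have h' := sub_eq_zero.mpr h
    rw [add_sub_cancel_left] at h'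
    have := (smul_eq_zero.mp h').resolve_right hd0
    simp at this
    exact htpos.ne' this
  have habs1 : |t| ≤ t := by rw [abs_of_pos htpos]
  have habs2 : |(-t)| ≤ t := by rw [abs_neg, abs_of_pos htpos]
  have hlt1 := hc _ (hstep t habs1) hne1
  have hlt2 := hc _ (hstep (-t) habs2) hne2
  rw [dotp_add_right, dotp_smul_right] at hlt1 hlt2
  linarith

lemma tight_injOn (hP : P = {v | ∀ i, dotp (intCastVec (uu i)) v ≤ aa i}) :
    Set.InjOn (tightSet uu aa) (vertices P) := by
  intro x hx y hy hxy
  have hRx := rigid_of_vertex hP hx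
  have horth : ∀ i ∈ tightSet uu aa x, dotp (intCastVec (uu i)) (x - y) = 0 := by
    intro i hi
    have h1 := mem_tightSet.mp hi
    have h2 := mem_tightSet.mp (hxy ▸ hi)
    rw [dotp_sub_right, h1, h2, sub_self]
  exact sub_eq_zero.mp (hRx (x - y) horth)

lemma vertices_finite (hP : P = {v | ∀ i, dotp (intCastVec (uu i)) v ≤ aa i}) :
    (vertices P).Finite :=
  Set.Finite.of_finite_image (Set.toFinite _) (tight_injOn hP)

lemma vertices_subset {P : Set (Fin n → ℝ)} : vertices P ⊆ P := fun _ hx => hx.1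

lemma exists_vertex_dominating (hP : P = {v | ∀ i, dotp (intCastVec (uu i)) v ≤ aa i})
    (hσ : σ = {v | ∀ i, dotp (intCastVec (uu i)) v ≤ 0}) (hpt : IsPointed σ)
    (w : Fin n → ℝ) (hw : ∀ x ∈ σ, dotp w x ≤ 0) :
    ∀ (m : ℕ) (v : Fin n → ℝ), v ∈ P → r - (tightSet uu aa v).card ≤ m →
      ∃ z ∈ vertices P, dotp w v ≤ dotp w z := by
  classical
  intro m
  induction m with
  | zero =>
    intro v hv hcard
    have huniv : tightSet uu aa v = Finset.univ := by
      apply Finset.eq_univ_of_card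
      have h1 : (tightSet uu aa v).card ≤ r := by
        simpa using Finset.card_le_univ (tightSet uu aa v)
      rw [Fintype.card_fin]
      omega
    by_cases hR : Rigid uu (tightSet uu aa v)
    · exact ⟨v, vertex_of_rigid hP hv hR, le_refl _⟩
    · exfalso
      unfold Rigid at hR
      push_neg at hR
      obtain ⟨d, hdorth, hd0⟩ := hR
      exact hd0 (inj_of_pointed hσ hpt (fun i => hdorth i (huniv ▸ Finset.mem_univ i)))
  | succ m IH =>
    intro v hv hcard
    by_cases hR : Rigid uu (tightSet uu aa v)
    · exact ⟨v, vertex_of_rigid hP hv hR, le_refl _⟩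
    unfold Rigid at hR
    push_neg at hR
    obtain ⟨d, hdorth, hd0⟩ := hR
    have hnotboth : ¬ (d ∈ σ ∧ -d ∈ σ) := by
      rintro ⟨h1, h2⟩
      rw [hσ] at h1 h2
      apply hd0
      apply inj_of_pointed hσ hpt
      intro i
      have h1i : dotp (intCastVec (uu i)) d ≤ 0 := h1 i
      have h2i : dotp (intCastVec (uu i)) (-d) ≤ 0 := h2 i
      rw [dotp_neg_right] at h2i
      linarith
    have hexitof : ∀ e : Fin n → ℝ, e ∉ σ → ∃ j, 0 < dotp (intCastVec (uu j)) e := by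
      intro e he
      rw [hσ] at he
      simp only [Set.mem_setOf_eq, not_forall, not_le] at he
      exact he
    obtain ⟨e, heorth, hwe, hexit⟩ :
        ∃ e : Fin n → ℝ, (∀ i ∈ tightSet uu aa v, dotp (intCastVec (uu i)) e = 0) ∧
          0 ≤ dotp w e ∧ ∃ j, 0 < dotp (intCastVec (uu j)) e := by
      have horthneg : ∀ i ∈ tightSet uu aa v, dotp (intCastVec (uu i)) (-d) = 0 := by
        intro i hi
        rw [dotp_neg_right, hdorth i hi, neg_zero]
      rcases le_or_gt (dotp w d) 0 with hle | hlt
      · by_cases hnd : -d ∈ σ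
        · refine ⟨d, hdorth, ?_, hexitof d (fun hdσ => hnotboth ⟨hdσ, hnd⟩)⟩
          have hwd := hw (-d) hnd
          rw [dotp_neg_right] at hwd
          linarith
        · exact ⟨-d, horthneg, by rw [dotp_neg_right]; linarith, hexitof (-d) hnd⟩
      · exact ⟨d, hdorth, hlt.le, hexitof d (fun hdσ => absurd (hw d hdσ) (not_le.mpr hlt))⟩
    obtain ⟨j₁, hj₁⟩ := hexit
    set J : Finset (Fin r) := Finset.univ.filter (fun j => 0 < dotp (intCastVec (uu j)) e) with hJ
    have hJne : J.Nonempty := ⟨j₁, Finset.mem_filter.mpr ⟨Finset.mem_univ _, hj₁⟩⟩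
    set q : Fin r → ℝ :=
      fun j => (aa j - dotp (intCastVec (uu j)) v) / dotp (intCastVec (uu j)) e with hq
    set t : ℝ := (J.image q).min' (hJne.image q) with htdef
    have htmem : t ∈ J.image q := (J.image q).min'_mem _
    obtain ⟨j₀, hj₀J, hj₀⟩ := Finset.mem_image.mp htmem
    have hj₀pos : 0 < dotp (intCastVec (uu j₀)) e := (Finset.mem_filter.mp hj₀J).2
    have ht_nonneg : 0 ≤ t := by
      rw [← hj₀, hq]
      apply div_nonneg
      · have := memP hP hv j₀
        linarith
      · exact hj₀pos.le
    have htle : ∀ j ∈ J, t ≤ q j := fun j hj =>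
      (J.image q).min'_le _ (Finset.mem_image_of_mem q hj)
    set v' : Fin n → ℝ := v + t • e with hv'
    have hAv' : ∀ i, dotp (intCastVec (uu i)) v' =
        dotp (intCastVec (uu i)) v + t * dotp (intCastVec (uu i)) e := by
      intro i
      rw [hv', dotp_add_right, dotp_smul_right]
    have hv'P : v' ∈ P := by
      rw [hP]
      intro i
      rw [hAv' i]
      rcases le_or_gt (dotp (intCastVec (uu i)) e) 0 with h | h
      · have hmul : t * dotp (intCastVec (uu i)) e ≤ 0 :=
          mul_nonpos_of_nonneg_of_nonpos ht_nonneg h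
        have := memP hP hv i
        linarith
      · have hiJ : i ∈ J := Finset.mem_filter.mpr ⟨Finset.mem_univ _, h⟩
        have h1 : t ≤ q i := htle i hiJ
        have h2 : q i * dotp (intCastVec (uu i)) e = aa i - dotp (intCastVec (uu i)) v := by
          rw [hq]
          exact div_mul_cancel₀ _ h.ne'
        have h3 := mul_le_mul_of_nonneg_right h1 h.le
        linarith
    have hsub : insert j₀ (tightSet uu aa v) ⊆ tightSet uu aa v' := by
      intro i hi
      rcases Finset.mem_insert.mp hi with rfl | hi
      · apply mem_tightSet.mpr
        rw [hAv' i, ← hj₀, hq]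
        dsimp only
        rw [div_mul_cancel₀ _ hj₀pos.ne']
        ring
      · apply mem_tightSet.mpr
        rw [hAv' i, heorth i hi, mul_zero, add_zero]
        exact mem_tightSet.mp hi
    have hj₀new : j₀ ∉ tightSet uu aa v := by
      intro hmem
      have := heorth j₀ hmem
      linarith
    have hcard' : r - (tightSet uu aa v').card ≤ m := by
      have h1 : (insert j₀ (tightSet uu aa v)).card ≤ (tightSet uu aa v').card :=
        Finset.card_le_card hsub
      rw [Finset.card_insert_of_notMem hj₀new] at h1
      omega
    obtain ⟨z, hz, hz2⟩ := IH v' hv'P hcard'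
    refine ⟨z, hz, le_trans ?_ hz2⟩
    rw [hv', dotp_add_right, dotp_smul_right]
    nlinarith

lemma vertices_nonempty (hP : P = {v | ∀ i, dotp (intCastVec (uu i)) v ≤ aa i})
    (hσ : σ = {v | ∀ i, dotp (intCastVec (uu i)) v ≤ 0}) (hpt : IsPointed σ)
    (hPne : P.Nonempty) : (vertices P).Nonempty := by
  obtain ⟨v, hv⟩ := hPne
  obtain ⟨z, hz, -⟩ := exists_vertex_dominating hP hσ hpt 0 (fun x _ => le_of_eq (dotp_zero_left x))
    r v hv (Nat.sub_le _ _)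
  exact ⟨z, hz⟩

end Poly
end Stmt12Aux
namespace Stmt12Aux
open Set

section KUPlem
variable {k : Type*} [NormedField k] {n : ℕ} {σ P : Set (Fin n → ℝ)}

/-- The weight `e^{⟨u,v⟩}`. -/
def expw {n : ℕ} {σ : Set (Fin n → ℝ)} (u : ↥(Ssigma σ)) (v : Fin n → ℝ) : ℝ :=
  Real.exp (dotp (intCastVec (u : Fin n → ℤ)) v)

lemma expw_def (u : ↥(Ssigma σ)) (v : Fin n → ℝ) :
    expw u v = Real.exp (dotp (intCastVec (u : Fin n → ℤ)) v) := rfl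

lemma expw_pos (u : ↥(Ssigma σ)) (v : Fin n → ℝ) : 0 < expw u v := Real.exp_pos _

lemma expw_add (u1 u2 : ↥(Ssigma σ)) (v : Fin n → ℝ) :
    expw (u1 + u2) v = expw u1 v * expw u2 v := by
  unfold expw
  rw [← Real.exp_add]
  congr 1
  rw [show ((u1 + u2 : ↥(Ssigma σ)) : Fin n → ℤ) = (u1 : Fin n → ℤ) + (u2 : Fin n → ℤ) from rfl,
    intCastVec_add, dotp_add_left]

lemma mem_KUP_iff {a : ↥(Ssigma σ) → k} :
    a ∈ KUP k σ P ↔ ∀ v ∈ P, ∀ ε > (0 : ℝ), {u : ↥(Ssigma σ) | ε ≤ ‖a u‖ * expw u v}.Finite :=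
  Iff.rfl

/-- Values of an element of `k⟨U_P⟩` are bounded at each point of `P`. -/
lemma bound_KUP {a : ↥(Ssigma σ) → k} (ha : a ∈ KUP k σ P) {v : Fin n → ℝ} (hv : v ∈ P) :
    ∃ C : ℝ, 0 < C ∧ ∀ u : ↥(Ssigma σ), ‖a u‖ * expw u v ≤ C := by
  classical
  set s := (ha v hv 1 one_pos).toFinset with hs
  refine ⟨1 + ∑ u ∈ s, ‖a u‖ * expw u v, ?_, ?_⟩
  · have : 0 ≤ ∑ u ∈ s, ‖a u‖ * expw u v :=
      Finset.sum_nonneg fun u _ => mul_nonneg (norm_nonneg _) (expw_pos u v).le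
    linarith
  · intro u
    by_cases hu : u ∈ s
    · have h1 : ‖a u‖ * expw u v ≤ ∑ x ∈ s, ‖a x‖ * expw x v :=
        Finset.single_le_sum (fun x _ => mul_nonneg (norm_nonneg _) (expw_pos x v).le) hu
      linarith
    · have : ¬ (1 : ℝ) ≤ ‖a u‖ * expw u v := by
        intro hcon
        exact hu (by rw [hs, Set.Finite.mem_toFinset]; exact hcon)
      have h2 : 0 ≤ ∑ x ∈ s, ‖a x‖ * expw x v :=
        Finset.sum_nonneg fun x _ => mul_nonneg (norm_nonneg _) (expw_pos x v).le
      push_neg at this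
      linarith

lemma pairFst_injective (u : ↥(Ssigma σ)) :
    Function.Injective
      (fun q : {q : ↥(Ssigma σ) × ↥(Ssigma σ) // q.1 + q.2 = u} =>
        (q : ↥(Ssigma σ) × ↥(Ssigma σ)).1) := by
  rintro ⟨⟨x1, x2⟩, hx⟩ ⟨⟨y1, y2⟩, hy⟩ h
  simp only at h
  subst h
  have : x2 = y2 := by
    have hxy : x1 + x2 = x1 + y2 := hx.trans hy.symm
    exact add_left_cancel hxy
  subst this
  rfl

lemma pairSnd_injective (u : ↥(Ssigma σ)) :
    Function.Injective
      (fun q : {q : ↥(Ssigma σ) × ↥(Ssigma σ) // q.1 + q.2 = u} =>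
        (q : ↥(Ssigma σ) × ↥(Ssigma σ)).2) := by
  rintro ⟨⟨x1, x2⟩, hx⟩ ⟨⟨y1, y2⟩, hy⟩ h
  simp only at h
  subst h
  have : x1 = y1 := by
    have hxy : x1 + x2 = y1 + x2 := hx.trans hy.symm
    exact add_right_cancel hxy
  subst this
  rfl

variable [CompleteSpace k]

/-- Summability of the convolution family. -/
lemma summable_conv (hna : IsNonarchimedean (fun x : k => ‖x‖))
    {a b : ↥(Ssigma σ) → k} (ha : a ∈ KUP k σ P) (hb : b ∈ KUP k σ P)
    {v : Fin n → ℝ} (hv : v ∈ P) (u : ↥(Ssigma σ)) :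
    Summable (fun q : {q : ↥(Ssigma σ) × ↥(Ssigma σ) // q.1 + q.2 = u} =>
      a (q : ↥(Ssigma σ) × ↥(Ssigma σ)).1 * b (q : ↥(Ssigma σ) × ↥(Ssigma σ)).2) := by
  obtain ⟨Cb, hCb, hCbb⟩ := bound_KUP hb hv
  apply na_summable hna
  intro ε hε
  have hpre : {q : {q : ↥(Ssigma σ) × ↥(Ssigma σ) // q.1 + q.2 = u} |
      ε ≤ ‖a (q : ↥(Ssigma σ) × ↥(Ssigma σ)).1 * b (q : ↥(Ssigma σ) × ↥(Ssigma σ)).2‖} ⊆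
      (fun q : {q : ↥(Ssigma σ) × ↥(Ssigma σ) // q.1 + q.2 = u} =>
        (q : ↥(Ssigma σ) × ↥(Ssigma σ)).1) ⁻¹'
      {x : ↥(Ssigma σ) | ε * expw u v / Cb ≤ ‖a x‖ * expw x v} := by
    rintro ⟨⟨x1, x2⟩, hx⟩ hq
    simp only [Set.mem_setOf_eq, norm_mul] at hq ⊢
    have hexp : expw u v = expw x1 v * expw x2 v := by rw [← hx, expw_add]
    have h1 : ε * expw u v ≤ (‖a x1‖ * expw x1 v) * (‖b x2‖ * expw x2 v) := by
      rw [hexp]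
      have := mul_le_mul_of_nonneg_right hq (le_of_lt (mul_pos (expw_pos x1 v) (expw_pos x2 v)))
      calc ε * (expw x1 v * expw x2 v) ≤ ‖a x1‖ * ‖b x2‖ * (expw x1 v * expw x2 v) := this
        _ = (‖a x1‖ * expw x1 v) * (‖b x2‖ * expw x2 v) := by ring
    show ε * expw u v / Cb ≤ ‖a x1‖ * expw x1 v
    rw [div_le_iff₀ hCb]
    calc ε * expw u v ≤ (‖a x1‖ * expw x1 v) * (‖b x2‖ * expw x2 v) := h1
      _ ≤ (‖a x1‖ * expw x1 v) * Cb := by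
          apply mul_le_mul_of_nonneg_left (hCbb x2)
          exact mul_nonneg (norm_nonneg _) (expw_pos x1 v).le
  apply Set.Finite.subset _ hpre
  apply Set.Finite.preimage
  · exact Set.injOn_of_injective (pairFst_injective u)
  · exact ha v hv _ (div_pos (mul_pos hε (expw_pos u v)) hCb)

/-- Nonarchimedean bound for the convolution values. -/
lemma conv_val_le (hna : IsNonarchimedean (fun x : k => ‖x‖))
    {a b : ↥(Ssigma σ) → k} (ha : a ∈ KUP k σ P) (hb : b ∈ KUP k σ P)
    {v : Fin n → ℝ} (hv : v ∈ P) (u : ↥(Ssigma σ)) {C : ℝ} (hC : 0 ≤ C)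
    (h : ∀ q : {q : ↥(Ssigma σ) × ↥(Ssigma σ) // q.1 + q.2 = u},
      (‖a (q : ↥(Ssigma σ) × ↥(Ssigma σ)).1‖ * expw (q : ↥(Ssigma σ) × ↥(Ssigma σ)).1 v) *
      (‖b (q : ↥(Ssigma σ) × ↥(Ssigma σ)).2‖ * expw (q : ↥(Ssigma σ) × ↥(Ssigma σ)).2 v) ≤ C) :
    ‖convKU a b u‖ * expw u v ≤ C := by
  have hpos := expw_pos u v
  have hkey : ‖convKU a b u‖ ≤ C * (expw u v)⁻¹ := by
    apply na_tsum_le hna (summable_conv hna ha hb hv u)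
      (mul_nonneg hC (inv_nonneg.mpr hpos.le))
    rintro ⟨⟨x1, x2⟩, hx⟩
    have hexp : expw u v = expw x1 v * expw x2 v := by rw [← hx, expw_add]
    have hq := h ⟨⟨x1, x2⟩, hx⟩
    simp only [norm_mul]
    rw [show ‖a x1‖ * ‖b x2‖ = ((‖a x1‖ * expw x1 v) * (‖b x2‖ * expw x2 v)) * (expw u v)⁻¹ by
      rw [hexp, mul_inv]
      have e1 := (expw_pos x1 v).ne'
      have e2 := (expw_pos x2 v).ne'
      field_simp]
    exact mul_le_mul_of_nonneg_right hq (inv_nonneg.mpr hpos.le)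
  calc ‖convKU a b u‖ * expw u v ≤ (C * (expw u v)⁻¹) * expw u v :=
        mul_le_mul_of_nonneg_right hkey hpos.le
    _ = C := by field_simp

/-- The convolution stays in `k⟨U_P⟩`. -/
lemma conv_mem_KUP (hna : IsNonarchimedean (fun x : k => ‖x‖))
    {a b : ↥(Ssigma σ) → k} (ha : a ∈ KUP k σ P) (hb : b ∈ KUP k σ P) :
    convKU a b ∈ KUP k σ P := by
  intro v hv ε hε
  obtain ⟨Ca, hCa, hCaa⟩ := bound_KUP ha hv
  obtain ⟨Cb, hCb, hCbb⟩ := bound_KUP hb hv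
  have hsub : {u : ↥(Ssigma σ) | ε ≤ ‖convKU a b u‖ * Real.exp (dotp (intCastVec (u : Fin n → ℤ)) v)}
      ⊆ (fun p : ↥(Ssigma σ) × ↥(Ssigma σ) => p.1 + p.2) ''
        (( {x : ↥(Ssigma σ) | ε / 2 / Cb ≤ ‖a x‖ * expw x v} ) ×ˢ
         ( {x : ↥(Ssigma σ) | ε / 2 / Ca ≤ ‖b x‖ * expw x v} )) := by
    intro u hu
    simp only [Set.mem_setOf_eq] at hu
    by_contra hcon
    have hall : ∀ q : {q : ↥(Ssigma σ) × ↥(Ssigma σ) // q.1 + q.2 = u},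
        (‖a (q : ↥(Ssigma σ) × ↥(Ssigma σ)).1‖ * expw (q : ↥(Ssigma σ) × ↥(Ssigma σ)).1 v) *
        (‖b (q : ↥(Ssigma σ) × ↥(Ssigma σ)).2‖ * expw (q : ↥(Ssigma σ) × ↥(Ssigma σ)).2 v) ≤ ε / 2 := by
      rintro ⟨⟨x1, x2⟩, hx⟩
      by_contra hq
      push_neg at hq
      apply hcon
      refine ⟨(x1, x2), ⟨?_, ?_⟩, hx⟩
      · simp only [Set.mem_setOf_eq]
        rw [div_le_iff₀ hCb]
        have h2 : ‖b x2‖ * expw x2 v ≤ Cb := hCbb x2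
        have h1 : 0 ≤ ‖a x1‖ * expw x1 v := mul_nonneg (norm_nonneg _) (expw_pos x1 v).le
        nlinarith
      · simp only [Set.mem_setOf_eq]
        rw [div_le_iff₀ hCa]
        have h2 : ‖a x1‖ * expw x1 v ≤ Ca := hCaa x1
        have h1 : 0 ≤ ‖b x2‖ * expw x2 v := mul_nonneg (norm_nonneg _) (expw_pos x2 v).le
        nlinarith
    have := conv_val_le hna ha hb hv u (by linarith : (0:ℝ) ≤ ε / 2) hall
    rw [← expw_def] at hu
    linarith
  apply Set.Finite.subset _ hsub
  apply Set.Finite.image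
  apply Set.Finite.prod
  · exact ha v hv _ (by positivity)
  · exact hb v hv _ (by positivity)

end KUPlem
end Stmt12Aux
namespace Stmt12Aux
open Set

section Alg
variable {k : Type*} [NormedField k] {n : ℕ} {σ P : Set (Fin n → ℝ)}

lemma add_mem_KUP (hna : IsNonarchimedean (fun x : k => ‖x‖))
    {a b : ↥(Ssigma σ) → k} (ha : a ∈ KUP k σ P) (hb : b ∈ KUP k σ P) :
    a + b ∈ KUP k σ P := by
  intro v hv ε hε
  apply Set.Finite.subset ((ha v hv ε hε).union (hb v hv ε hε))
  intro u hu
  simp only [Set.mem_setOf_eq, Pi.add_apply] at hu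
  simp only [Set.mem_union, Set.mem_setOf_eq]
  have hmax := hna (a u) (b u)
  have hpos := Real.exp_pos (dotp (intCastVec (u : Fin n → ℤ)) v)
  rcases max_cases ‖a u‖ ‖b u‖ with ⟨hm, _⟩ | ⟨hm, _⟩
  · left
    have : ‖a u + b u‖ ≤ ‖a u‖ := by rw [← hm]; exact hmax
    nlinarith
  · right
    have : ‖a u + b u‖ ≤ ‖b u‖ := by rw [← hm]; exact hmax
    nlinarith

lemma smul_mem_KUP {a : ↥(Ssigma σ) → k} (ha : a ∈ KUP k σ P) (c : k) :
    c • a ∈ KUP k σ P := by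
  intro v hv ε hε
  by_cases hc : c = 0
  · apply Set.Finite.subset (Set.finite_empty)
    intro u hu
    simp only [Set.mem_setOf_eq, Pi.smul_apply, hc, zero_smul, norm_zero, zero_mul] at hu
    linarith
  · have hcpos : 0 < ‖c‖ := norm_pos_iff.mpr hc
    apply Set.Finite.subset (ha v hv (ε / ‖c‖) (div_pos hε hcpos))
    intro u hu
    simp only [Set.mem_setOf_eq, Pi.smul_apply, norm_smul] at hu ⊢
    rw [div_le_iff₀ hcpos]
    nlinarith [Real.exp_pos (dotp (intCastVec (u : Fin n → ℤ)) v), norm_nonneg (a u)]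

variable [CompleteSpace k]

lemma conv_comm (a b : ↥(Ssigma σ) → k) : convKU a b = convKU b a := by
  funext u
  unfold convKU
  let e : {q : ↥(Ssigma σ) × ↥(Ssigma σ) // q.1 + q.2 = u} ≃
      {q : ↥(Ssigma σ) × ↥(Ssigma σ) // q.1 + q.2 = u} :=
    { toFun := fun q => ⟨(q.1.2, q.1.1), (add_comm q.1.2 q.1.1).trans q.2⟩
      invFun := fun q => ⟨(q.1.2, q.1.1), (add_comm q.1.2 q.1.1).trans q.2⟩
      left_inv := by rintro ⟨⟨x1, x2⟩, hx⟩; rfl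
      right_inv := by rintro ⟨⟨x1, x2⟩, hx⟩; rfl }
  rw [← Equiv.tsum_eq e (fun q => b (q : ↥(Ssigma σ) × ↥(Ssigma σ)).1 *
    a (q : ↥(Ssigma σ) × ↥(Ssigma σ)).2)]
  apply tsum_congr
  rintro ⟨⟨x1, x2⟩, hx⟩
  exact mul_comm (a x1) (b x2)

lemma conv_add (hna : IsNonarchimedean (fun x : k => ‖x‖))
    {a b c : ↥(Ssigma σ) → k} (ha : a ∈ KUP k σ P) (hb : b ∈ KUP k σ P)
    (hc : c ∈ KUP k σ P) {v : Fin n → ℝ} (hv : v ∈ P) :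
    convKU a (b + c) = convKU a b + convKU a c := by
  funext u
  unfold convKU
  simp only [Pi.add_apply]
  rw [← Summable.tsum_add (summable_conv hna ha hb hv u) (summable_conv hna ha hc hv u)]
  apply tsum_congr
  rintro ⟨⟨x1, x2⟩, hx⟩
  simp [mul_add]

open Classical in
lemma delta_mem_KUP : deltaZero k σ ∈ KUP k σ P := by
  intro v hv ε hε
  apply Set.Finite.subset (Set.finite_singleton (0 : ↥(Ssigma σ)))
  intro u hu
  simp only [Set.mem_setOf_eq] at hu
  simp only [Set.mem_singleton_iff]
  by_contra hne
  rw [deltaZero, if_neg hne] at hu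
  simp only [norm_zero, zero_mul] at hu
  linarith

lemma delta_conv (a : ↥(Ssigma σ) → k) : convKU (deltaZero k σ) a = a := by
  classical
  funext u
  unfold convKU
  rw [tsum_eq_single (⟨((0 : ↥(Ssigma σ)), u), by rw [zero_add]⟩ :
      {q : ↥(Ssigma σ) × ↥(Ssigma σ) // q.1 + q.2 = u})]
  · simp [deltaZero]
  · rintro ⟨⟨x1, x2⟩, hx⟩ hne
    by_cases h1 : x1 = 0
    · exfalso
      apply hne
      apply Subtype.ext
      simp only
      subst h1
      have hx2 : x2 = u := by simpa using hx
      rw [hx2]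
    · rw [show deltaZero k σ x1 = 0 from if_neg h1, zero_mul]

/-- Triple summability. -/
lemma summable_triple (hna : IsNonarchimedean (fun x : k => ‖x‖))
    {a b c : ↥(Ssigma σ) → k} (ha : a ∈ KUP k σ P) (hb : b ∈ KUP k σ P)
    (hc : c ∈ KUP k σ P) {v : Fin n → ℝ} (hv : v ∈ P) (u : ↥(Ssigma σ)) :
    Summable (fun t : {t : ↥(Ssigma σ) × ↥(Ssigma σ) × ↥(Ssigma σ) //
        t.1 + t.2.1 + t.2.2 = u} =>
      a (t : ↥(Ssigma σ) × ↥(Ssigma σ) × ↥(Ssigma σ)).1 *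
      b (t : ↥(Ssigma σ) × ↥(Ssigma σ) × ↥(Ssigma σ)).2.1 *
      c (t : ↥(Ssigma σ) × ↥(Ssigma σ) × ↥(Ssigma σ)).2.2) := by
  obtain ⟨Ca, hCa, hCaa⟩ := bound_KUP ha hv
  obtain ⟨Cb, hCb, hCbb⟩ := bound_KUP hb hv
  obtain ⟨Cc, hCc, hCcc⟩ := bound_KUP hc hv
  apply na_summable hna
  intro ε hε
  have hinj : Function.Injective (fun t : {t : ↥(Ssigma σ) × ↥(Ssigma σ) × ↥(Ssigma σ) //
      t.1 + t.2.1 + t.2.2 = u} =>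
      ((t : ↥(Ssigma σ) × ↥(Ssigma σ) × ↥(Ssigma σ)).1,
       (t : ↥(Ssigma σ) × ↥(Ssigma σ) × ↥(Ssigma σ)).2.1)) := by
    rintro ⟨⟨x1, x2, x3⟩, hx⟩ ⟨⟨y1, y2, y3⟩, hy⟩ h
    simp only [Prod.mk.injEq] at h
    obtain ⟨h1, h2⟩ := h
    subst h1; subst h2
    have : x3 = y3 := add_left_cancel (hx.trans hy.symm)
    subst this
    rfl
  have hsub : {t : {t : ↥(Ssigma σ) × ↥(Ssigma σ) × ↥(Ssigma σ) // t.1 + t.2.1 + t.2.2 = u} |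
      ε ≤ ‖a (t : ↥(Ssigma σ) × ↥(Ssigma σ) × ↥(Ssigma σ)).1 *
        b (t : ↥(Ssigma σ) × ↥(Ssigma σ) × ↥(Ssigma σ)).2.1 *
        c (t : ↥(Ssigma σ) × ↥(Ssigma σ) × ↥(Ssigma σ)).2.2‖} ⊆
      (fun t : {t : ↥(Ssigma σ) × ↥(Ssigma σ) × ↥(Ssigma σ) // t.1 + t.2.1 + t.2.2 = u} =>
        ((t : ↥(Ssigma σ) × ↥(Ssigma σ) × ↥(Ssigma σ)).1,
         (t : ↥(Ssigma σ) × ↥(Ssigma σ) × ↥(Ssigma σ)).2.1)) ⁻¹'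
      (({x : ↥(Ssigma σ) | ε * expw u v / (Cb * Cc) ≤ ‖a x‖ * expw x v}) ×ˢ
       ({x : ↥(Ssigma σ) | ε * expw u v / (Ca * Cc) ≤ ‖b x‖ * expw x v})) := by
    rintro ⟨⟨x1, x2, x3⟩, hx⟩ ht
    simp only [Set.mem_setOf_eq, norm_mul] at ht
    have hexp : expw u v = expw x1 v * expw x2 v * expw x3 v := by
      rw [← hx, expw_add, expw_add]
    set A := ‖a x1‖ * expw x1 v with hA
    set B := ‖b x2‖ * expw x2 v with hB
    set Cf := ‖c x3‖ * expw x3 v with hCf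
    have hA0 : 0 ≤ A := mul_nonneg (norm_nonneg _) (expw_pos _ _).le
    have hB0 : 0 ≤ B := mul_nonneg (norm_nonneg _) (expw_pos _ _).le
    have hCf0 : 0 ≤ Cf := mul_nonneg (norm_nonneg _) (expw_pos _ _).le
    have hprod : ε * expw u v ≤ A * B * Cf := by
      rw [hexp, hA, hB, hCf]
      have := mul_le_mul_of_nonneg_right ht
        (le_of_lt (mul_pos (mul_pos (expw_pos x1 v) (expw_pos x2 v)) (expw_pos x3 v)))
      calc ε * (expw x1 v * expw x2 v * expw x3 v) ≤
          ‖a x1‖ * ‖b x2‖ * ‖c x3‖ * (expw x1 v * expw x2 v * expw x3 v) := this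
        _ = ‖a x1‖ * expw x1 v * (‖b x2‖ * expw x2 v) * (‖c x3‖ * expw x3 v) := by ring
    constructor
    · show ε * expw u v / (Cb * Cc) ≤ A
      rw [div_le_iff₀ (mul_pos hCb hCc)]
      have h1 : A * B ≤ A * Cb := mul_le_mul_of_nonneg_left (hCbb x2) hA0
      have h2 : A * B * Cf ≤ A * B * Cc := mul_le_mul_of_nonneg_left (hCcc x3) (mul_nonneg hA0 hB0)
      nlinarith
    · show ε * expw u v / (Ca * Cc) ≤ B
      rw [div_le_iff₀ (mul_pos hCa hCc)]
      have h1 : A * B ≤ Ca * B := mul_le_mul_of_nonneg_right (hCaa x1) hB0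
      have h2 : A * B * Cf ≤ Ca * B * Cf := mul_le_mul_of_nonneg_right h1 hCf0
      have h3 : Ca * B * Cf ≤ Ca * B * Cc :=
        mul_le_mul_of_nonneg_left (hCcc x3) (mul_nonneg hCa.le hB0)
      nlinarith
  apply Set.Finite.subset _ hsub
  apply Set.Finite.preimage (Set.injOn_of_injective hinj)
  apply Set.Finite.prod
  · exact ha v hv _ (div_pos (mul_pos hε (expw_pos u v)) (mul_pos hCb hCc))
  · exact hb v hv _ (div_pos (mul_pos hε (expw_pos u v)) (mul_pos hCa hCc))

set_option maxHeartbeats 1000000 in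
lemma conv_assoc (hna : IsNonarchimedean (fun x : k => ‖x‖))
    {a b c : ↥(Ssigma σ) → k} (ha : a ∈ KUP k σ P) (hb : b ∈ KUP k σ P)
    (hc : c ∈ KUP k σ P) {v : Fin n → ℝ} (hv : v ∈ P) :
    convKU (convKU a b) c = convKU a (convKU b c) := by
  classical
  funext u
  have hfsumm : Summable (fun t : {t : ↥(Ssigma σ) × ↥(Ssigma σ) × ↥(Ssigma σ) // t.1 + t.2.1 + t.2.2 = u} =>
      a (t : ↥(Ssigma σ) × ↥(Ssigma σ) × ↥(Ssigma σ)).1 * b (t : ↥(Ssigma σ) × ↥(Ssigma σ) × ↥(Ssigma σ)).2.1 * c (t : ↥(Ssigma σ) × ↥(Ssigma σ) × ↥(Ssigma σ)).2.2) :=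
    summable_triple hna ha hb hc hv u
  let eL : (Σ q : {q : ↥(Ssigma σ) × ↥(Ssigma σ) // q.1 + q.2 = u},
      {p : ↥(Ssigma σ) × ↥(Ssigma σ) // p.1 + p.2 = (q : ↥(Ssigma σ) × ↥(Ssigma σ)).1}) ≃
      {t : ↥(Ssigma σ) × ↥(Ssigma σ) × ↥(Ssigma σ) // t.1 + t.2.1 + t.2.2 = u} :=
    { toFun := fun s => ⟨((s.2 : ↥(Ssigma σ) × ↥(Ssigma σ)).1, (s.2 : ↥(Ssigma σ) × ↥(Ssigma σ)).2, (s.1 : ↥(Ssigma σ) × ↥(Ssigma σ)).2), by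
        show (s.2 : ↥(Ssigma σ) × ↥(Ssigma σ)).1 + (s.2 : ↥(Ssigma σ) × ↥(Ssigma σ)).2 + (s.1 : ↥(Ssigma σ) × ↥(Ssigma σ)).2 = u
        rw [s.2.2, s.1.2]⟩
      invFun := fun t => ⟨⟨((t : ↥(Ssigma σ) × ↥(Ssigma σ) × ↥(Ssigma σ)).1 + (t : ↥(Ssigma σ) × ↥(Ssigma σ) × ↥(Ssigma σ)).2.1,
          (t : ↥(Ssigma σ) × ↥(Ssigma σ) × ↥(Ssigma σ)).2.2), t.2⟩,
        ⟨((t : ↥(Ssigma σ) × ↥(Ssigma σ) × ↥(Ssigma σ)).1, (t : ↥(Ssigma σ) × ↥(Ssigma σ) × ↥(Ssigma σ)).2.1), rfl⟩⟩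
      left_inv := by
        rintro ⟨⟨⟨q1, q2⟩, hq⟩, ⟨⟨p1, p2⟩, hp⟩⟩
        simp only at hp
        subst hp
        rfl
      right_inv := by
        rintro ⟨⟨t1, t2, t3⟩, htp⟩
        rfl }
  have heL : ∀ s, ((eL s : {t : ↥(Ssigma σ) × ↥(Ssigma σ) × ↥(Ssigma σ) // t.1 + t.2.1 + t.2.2 = u}) :
      ↥(Ssigma σ) × ↥(Ssigma σ) × ↥(Ssigma σ)) =
      ((s.2 : ↥(Ssigma σ) × ↥(Ssigma σ)).1, (s.2 : ↥(Ssigma σ) × ↥(Ssigma σ)).2, (s.1 : ↥(Ssigma σ) × ↥(Ssigma σ)).2) := by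
    rintro ⟨⟨⟨q1, q2⟩, hq⟩, ⟨⟨p1, p2⟩, hp⟩⟩
    rfl
  let eR : (Σ q : {q : ↥(Ssigma σ) × ↥(Ssigma σ) // q.1 + q.2 = u},
      {p : ↥(Ssigma σ) × ↥(Ssigma σ) // p.1 + p.2 = (q : ↥(Ssigma σ) × ↥(Ssigma σ)).2}) ≃
      {t : ↥(Ssigma σ) × ↥(Ssigma σ) × ↥(Ssigma σ) // t.1 + t.2.1 + t.2.2 = u} :=
    { toFun := fun s => ⟨((s.1 : ↥(Ssigma σ) × ↥(Ssigma σ)).1, (s.2 : ↥(Ssigma σ) × ↥(Ssigma σ)).1, (s.2 : ↥(Ssigma σ) × ↥(Ssigma σ)).2), by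
        show (s.1 : ↥(Ssigma σ) × ↥(Ssigma σ)).1 + (s.2 : ↥(Ssigma σ) × ↥(Ssigma σ)).1 + (s.2 : ↥(Ssigma σ) × ↥(Ssigma σ)).2 = u
        rw [add_assoc, s.2.2, s.1.2]⟩
      invFun := fun t => ⟨⟨((t : ↥(Ssigma σ) × ↥(Ssigma σ) × ↥(Ssigma σ)).1,
          (t : ↥(Ssigma σ) × ↥(Ssigma σ) × ↥(Ssigma σ)).2.1 + (t : ↥(Ssigma σ) × ↥(Ssigma σ) × ↥(Ssigma σ)).2.2), by
          rw [← add_assoc]; exact t.2⟩,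
        ⟨((t : ↥(Ssigma σ) × ↥(Ssigma σ) × ↥(Ssigma σ)).2.1, (t : ↥(Ssigma σ) × ↥(Ssigma σ) × ↥(Ssigma σ)).2.2), rfl⟩⟩
      left_inv := by
        rintro ⟨⟨⟨q1, q2⟩, hq⟩, ⟨⟨p1, p2⟩, hp⟩⟩
        simp only at hp
        subst hp
        rfl
      right_inv := by
        rintro ⟨⟨t1, t2, t3⟩, htp⟩
        rfl }
  have heR : ∀ s, ((eR s : {t : ↥(Ssigma σ) × ↥(Ssigma σ) × ↥(Ssigma σ) // t.1 + t.2.1 + t.2.2 = u}) :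
      ↥(Ssigma σ) × ↥(Ssigma σ) × ↥(Ssigma σ)) =
      ((s.1 : ↥(Ssigma σ) × ↥(Ssigma σ)).1, (s.2 : ↥(Ssigma σ) × ↥(Ssigma σ)).1, (s.2 : ↥(Ssigma σ) × ↥(Ssigma σ)).2) := by
    rintro ⟨⟨⟨q1, q2⟩, hq⟩, ⟨⟨p1, p2⟩, hp⟩⟩
    rfl
  have hsummL : Summable (fun s : (Σ q : {q : ↥(Ssigma σ) × ↥(Ssigma σ) // q.1 + q.2 = u},
      {p : ↥(Ssigma σ) × ↥(Ssigma σ) // p.1 + p.2 = (q : ↥(Ssigma σ) × ↥(Ssigma σ)).1}) =>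
      a (s.2 : ↥(Ssigma σ) × ↥(Ssigma σ)).1 * b (s.2 : ↥(Ssigma σ) × ↥(Ssigma σ)).2 * c (s.1 : ↥(Ssigma σ) × ↥(Ssigma σ)).2) := by
    apply ((Equiv.summable_iff eL).mpr hfsumm).congr
    intro s
    simp only [Function.comp_apply, heL s]
  have hsummR : Summable (fun s : (Σ q : {q : ↥(Ssigma σ) × ↥(Ssigma σ) // q.1 + q.2 = u},
      {p : ↥(Ssigma σ) × ↥(Ssigma σ) // p.1 + p.2 = (q : ↥(Ssigma σ) × ↥(Ssigma σ)).2}) =>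
      a (s.1 : ↥(Ssigma σ) × ↥(Ssigma σ)).1 * (b (s.2 : ↥(Ssigma σ) × ↥(Ssigma σ)).1 * c (s.2 : ↥(Ssigma σ) × ↥(Ssigma σ)).2)) := by
    apply ((Equiv.summable_iff eR).mpr hfsumm).congr
    intro s
    simp only [Function.comp_apply, heR s]
    ring
  have hL : convKU (convKU a b) c u =
      ∑' t : {t : ↥(Ssigma σ) × ↥(Ssigma σ) × ↥(Ssigma σ) // t.1 + t.2.1 + t.2.2 = u},
        a (t : ↥(Ssigma σ) × ↥(Ssigma σ) × ↥(Ssigma σ)).1 * b (t : ↥(Ssigma σ) × ↥(Ssigma σ) × ↥(Ssigma σ)).2.1 * c (t : ↥(Ssigma σ) × ↥(Ssigma σ) × ↥(Ssigma σ)).2.2 := by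
    calc convKU (convKU a b) c u
        = ∑' q : {q : ↥(Ssigma σ) × ↥(Ssigma σ) // q.1 + q.2 = u},
            ∑' p : {p : ↥(Ssigma σ) × ↥(Ssigma σ) // p.1 + p.2 = (q : ↥(Ssigma σ) × ↥(Ssigma σ)).1},
              a (p : ↥(Ssigma σ) × ↥(Ssigma σ)).1 * b (p : ↥(Ssigma σ) × ↥(Ssigma σ)).2 * c (q : ↥(Ssigma σ) × ↥(Ssigma σ)).2 := by
          unfold convKU
          apply tsum_congr
          intro q
          rw [← tsum_mul_right]
      _ = ∑' s : (Σ q : {q : ↥(Ssigma σ) × ↥(Ssigma σ) // q.1 + q.2 = u},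
            {p : ↥(Ssigma σ) × ↥(Ssigma σ) // p.1 + p.2 = (q : ↥(Ssigma σ) × ↥(Ssigma σ)).1}),
            a (s.2 : ↥(Ssigma σ) × ↥(Ssigma σ)).1 * b (s.2 : ↥(Ssigma σ) × ↥(Ssigma σ)).2 * c (s.1 : ↥(Ssigma σ) × ↥(Ssigma σ)).2 :=
          (Summable.tsum_sigma' (f := fun s : (Σ q : {q : ↥(Ssigma σ) × ↥(Ssigma σ) // q.1 + q.2 = u},
              {p : ↥(Ssigma σ) × ↥(Ssigma σ) // p.1 + p.2 = (q : ↥(Ssigma σ) × ↥(Ssigma σ)).1}) =>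
              a (s.2 : ↥(Ssigma σ) × ↥(Ssigma σ)).1 * b (s.2 : ↥(Ssigma σ) × ↥(Ssigma σ)).2 * c (s.1 : ↥(Ssigma σ) × ↥(Ssigma σ)).2)
            (fun q => ((summable_conv hna ha hb hv (q : ↥(Ssigma σ) × ↥(Ssigma σ)).1).mul_right
              (c (q : ↥(Ssigma σ) × ↥(Ssigma σ)).2)).congr (fun p => rfl)) hsummL).symm
      _ = _ := by
          rw [← Equiv.tsum_eq eL (fun t : {t : ↥(Ssigma σ) × ↥(Ssigma σ) × ↥(Ssigma σ) // t.1 + t.2.1 + t.2.2 = u} =>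
            a (t : ↥(Ssigma σ) × ↥(Ssigma σ) × ↥(Ssigma σ)).1 * b (t : ↥(Ssigma σ) × ↥(Ssigma σ) × ↥(Ssigma σ)).2.1 * c (t : ↥(Ssigma σ) × ↥(Ssigma σ) × ↥(Ssigma σ)).2.2)]
          apply tsum_congr
          intro s
          simp only [heL s]
  have hR : convKU a (convKU b c) u =
      ∑' t : {t : ↥(Ssigma σ) × ↥(Ssigma σ) × ↥(Ssigma σ) // t.1 + t.2.1 + t.2.2 = u},
        a (t : ↥(Ssigma σ) × ↥(Ssigma σ) × ↥(Ssigma σ)).1 * b (t : ↥(Ssigma σ) × ↥(Ssigma σ) × ↥(Ssigma σ)).2.1 * c (t : ↥(Ssigma σ) × ↥(Ssigma σ) × ↥(Ssigma σ)).2.2 := by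
    calc convKU a (convKU b c) u
        = ∑' q : {q : ↥(Ssigma σ) × ↥(Ssigma σ) // q.1 + q.2 = u},
            ∑' p : {p : ↥(Ssigma σ) × ↥(Ssigma σ) // p.1 + p.2 = (q : ↥(Ssigma σ) × ↥(Ssigma σ)).2},
              a (q : ↥(Ssigma σ) × ↥(Ssigma σ)).1 * (b (p : ↥(Ssigma σ) × ↥(Ssigma σ)).1 * c (p : ↥(Ssigma σ) × ↥(Ssigma σ)).2) := by
          unfold convKU
          apply tsum_congr
          intro q
          rw [← tsum_mul_left]
      _ = ∑' s : (Σ q : {q : ↥(Ssigma σ) × ↥(Ssigma σ) // q.1 + q.2 = u},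
            {p : ↥(Ssigma σ) × ↥(Ssigma σ) // p.1 + p.2 = (q : ↥(Ssigma σ) × ↥(Ssigma σ)).2}),
            a (s.1 : ↥(Ssigma σ) × ↥(Ssigma σ)).1 * (b (s.2 : ↥(Ssigma σ) × ↥(Ssigma σ)).1 * c (s.2 : ↥(Ssigma σ) × ↥(Ssigma σ)).2) :=
          (Summable.tsum_sigma' (f := fun s : (Σ q : {q : ↥(Ssigma σ) × ↥(Ssigma σ) // q.1 + q.2 = u},
              {p : ↥(Ssigma σ) × ↥(Ssigma σ) // p.1 + p.2 = (q : ↥(Ssigma σ) × ↥(Ssigma σ)).2}) =>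
              a (s.1 : ↥(Ssigma σ) × ↥(Ssigma σ)).1 * (b (s.2 : ↥(Ssigma σ) × ↥(Ssigma σ)).1 * c (s.2 : ↥(Ssigma σ) × ↥(Ssigma σ)).2))
            (fun q => ((summable_conv hna hb hc hv (q : ↥(Ssigma σ) × ↥(Ssigma σ)).2).mul_left
              (a (q : ↥(Ssigma σ) × ↥(Ssigma σ)).1)).congr (fun p => rfl)) hsummR).symm
      _ = _ := by
          rw [← Equiv.tsum_eq eR (fun t : {t : ↥(Ssigma σ) × ↥(Ssigma σ) × ↥(Ssigma σ) // t.1 + t.2.1 + t.2.2 = u} =>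
            a (t : ↥(Ssigma σ) × ↥(Ssigma σ) × ↥(Ssigma σ)).1 * b (t : ↥(Ssigma σ) × ↥(Ssigma σ) × ↥(Ssigma σ)).2.1 * c (t : ↥(Ssigma σ) × ↥(Ssigma σ) × ↥(Ssigma σ)).2.2)]
          apply tsum_congr
          intro s
          simp only [heR s]
          ring
  rw [hL, hR]

end Alg
end Stmt12Aux
namespace Stmt12Aux
open Set Filter

section NormLem
variable {k : Type*} [NormedField k] {n r : ℕ} {uu : Fin r → (Fin n → ℤ)} {aa : Fin r → ℝ}
  {P σ : Set (Fin n → ℝ)}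

lemma zero_mem_KUP : (0 : ↥(Ssigma σ) → k) ∈ KUP k σ P := by
  intro v hv ε hε
  apply Set.Finite.subset Set.finite_empty
  intro u hu
  simp only [Set.mem_setOf_eq, Pi.zero_apply, norm_zero, zero_mul] at hu
  linarith

lemma sub_mem_KUP (hna : IsNonarchimedean (fun x : k => ‖x‖))
    {a b : ↥(Ssigma σ) → k} (ha : a ∈ KUP k σ P) (hb : b ∈ KUP k σ P) :
    a - b ∈ KUP k σ P := by
  have h1 := smul_mem_KUP hb (-1 : k)
  have h2 := add_mem_KUP hna ha h1
  have : a - b = a + (-1 : k) • b := by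
    funext u
    simp [sub_eq_add_neg]
  rwa [this]

lemma isGreatest_normP (hP : P = {v | ∀ i, dotp (intCastVec (uu i)) v ≤ aa i})
    (hσ : σ = {v | ∀ i, dotp (intCastVec (uu i)) v ≤ 0}) (hpt : IsPointed σ)
    (hPne : P.Nonempty) {a : ↥(Ssigma σ) → k} (ha : a ∈ KUP k σ P) :
    IsGreatest {x : ℝ | ∃ u : ↥(Ssigma σ), ∃ v ∈ vertices P,
      x = ‖a u‖ * Real.exp (dotp (intCastVec (u : Fin n → ℤ)) v)} (normP σ P a) := by
  have hVfin := vertices_finite hP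
  obtain ⟨v₀, hv₀⟩ := vertices_nonempty hP hσ hpt hPne
  exact exists_isGreatest_of_finite_large
    {x : ℝ | ∃ u : ↥(Ssigma σ), ∃ v ∈ vertices P,
      x = ‖a u‖ * Real.exp (dotp (intCastVec (u : Fin n → ℤ)) v)}
    ⟨_, 0, v₀, hv₀, rfl⟩
    (by rintro x ⟨u, v, hv, rfl⟩; exact mul_nonneg (norm_nonneg _) (Real.exp_pos _).le)
    (by
      intro ε hε
      apply Set.Finite.subset (Set.Finite.biUnion hVfin
        (fun v _ => Set.Finite.image
          (fun u : ↥(Ssigma σ) => ‖a u‖ * Real.exp (dotp (intCastVec (u : Fin n → ℤ)) v))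
          (ha v (vertices_subset ‹v ∈ vertices P›) ε hε)))
      rintro x ⟨⟨u, v, hv, rfl⟩, hx⟩
      exact Set.mem_biUnion hv ⟨u, Set.mem_Ici.mp hx, rfl⟩)

end NormLem
end Stmt12Aux
/-- Let `k` be a complete nonarchimedean valued field and `P ⊆ ℝⁿ` a
nonempty pointed rational polyhedron with recession cone `σ`.  Then:
(a) for `a, b ∈ k⟨U_P⟩` and every `u ∈ S_σ` the convolution family
`(a_{u'} b_{u''})_{u'+u''=u}` is summable, and `k⟨U_P⟩` is a commutative `k`-algebra
under pointwise addition, scalar multiplication, and convolution (closure under all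
operations, commutativity, associativity, distributivity, unit `δ₀`);
(b) `|a|_P = max_{u ∈ S_σ, v ∈ Vert P} ‖a_u‖ e^{⟨u,v⟩}` is a well-defined maximum and a
nonarchimedean norm: `|a|_P = 0 ↔ a = 0`, `|a+b|_P ≤ max (|a|_P) (|b|_P)`,
`|a*b|_P ≤ |a|_P |b|_P`, and `|c • a|_P = ‖c‖ |a|_P` for `c : k`;
(c) `k⟨U_P⟩` is complete for `|·|_P` (every Cauchy sequence converges in `k⟨U_P⟩`). -/
theorem stmt12 {k : Type*} [NormedField k] [CompleteSpace k]
    (hna : IsNonarchimedean (fun x : k => ‖x‖))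
    {n r : ℕ} (uu : Fin r → (Fin n → ℤ)) (aa : Fin r → ℝ)
    (P σ : Set (Fin n → ℝ))
    (hP : P = {v | ∀ i, dotp (intCastVec (uu i)) v ≤ aa i})
    (hσ : σ = {v | ∀ i, dotp (intCastVec (uu i)) v ≤ 0})
    (hpt : IsPointed σ) (hPne : P.Nonempty) :
    -- (a) summability and the commutative `k`-algebra structure
    (∀ a ∈ KUP k σ P, ∀ b ∈ KUP k σ P,
      (∀ u : ↥(Ssigma σ),
        Summable (fun q : {q : ↥(Ssigma σ) × ↥(Ssigma σ) // q.1 + q.2 = u} =>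
          a (q : ↥(Ssigma σ) × ↥(Ssigma σ)).1 * b (q : ↥(Ssigma σ) × ↥(Ssigma σ)).2)) ∧
      convKU a b ∈ KUP k σ P ∧
      a + b ∈ KUP k σ P ∧ (∀ c : k, c • a ∈ KUP k σ P) ∧
      convKU a b = convKU b a ∧
      (∀ c ∈ KUP k σ P, convKU (convKU a b) c = convKU a (convKU b c) ∧
        convKU a (b + c) = convKU a b + convKU a c) ∧
      deltaZero k σ ∈ KUP k σ P ∧ convKU (deltaZero k σ) a = a) ∧
    -- (b) `|·|_P` is a well-defined nonarchimedean norm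
    (∀ a ∈ KUP k σ P,
      IsGreatest {x : ℝ | ∃ u : ↥(Ssigma σ), ∃ v ∈ vertices P,
          x = ‖a u‖ * Real.exp (dotp (intCastVec (u : Fin n → ℤ)) v)}
        (normP σ P a) ∧
      (normP σ P a = 0 ↔ a = 0) ∧
      (∀ b ∈ KUP k σ P, normP σ P (a + b) ≤ max (normP σ P a) (normP σ P b) ∧
        normP σ P (convKU a b) ≤ normP σ P a * normP σ P b) ∧
      (∀ c : k, normP σ P (c • a) = ‖c‖ * normP σ P a)) ∧
    -- (c) completeness
    (∀ F : ℕ → (↥(Ssigma σ) → k), (∀ m, F m ∈ KUP k σ P) →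
      (∀ ε > (0 : ℝ), ∃ N, ∀ m ≥ N, ∀ m' ≥ N, normP σ P (F m - F m') < ε) →
      ∃ L ∈ KUP k σ P, ∀ ε > (0 : ℝ), ∃ N, ∀ m ≥ N, normP σ P (F m - L) < ε) := by

  classical
  open Stmt12Aux in
  obtain ⟨v₀, hv₀P⟩ := hPne
  have hVfin := Stmt12Aux.vertices_finite hP
  obtain ⟨w₀, hw₀⟩ := Stmt12Aux.vertices_nonempty hP hσ hpt ⟨v₀, hv₀P⟩
  have hw₀P : w₀ ∈ P := hw₀.1
  -- the norm is a maximum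
  have hgr : ∀ a ∈ KUP k σ P, IsGreatest {x : ℝ | ∃ u : ↥(Ssigma σ), ∃ v ∈ vertices P,
      x = ‖a u‖ * Real.exp (dotp (intCastVec (u : Fin n → ℤ)) v)} (normP σ P a) :=
    fun a ha => Stmt12Aux.isGreatest_normP hP hσ hpt ⟨v₀, hv₀P⟩ ha
  have hle : ∀ a ∈ KUP k σ P, ∀ (u : ↥(Ssigma σ)) (v : Fin n → ℝ), v ∈ vertices P →
      ‖a u‖ * Real.exp (dotp (intCastVec (u : Fin n → ℤ)) v) ≤ normP σ P a :=
    fun a ha u v hv => (hgr a ha).2 ⟨u, v, hv, rfl⟩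
  have hnormle : ∀ (a : ↥(Ssigma σ) → k) (C : ℝ), 0 ≤ C →
      (∀ (u : ↥(Ssigma σ)) (v : Fin n → ℝ), v ∈ vertices P →
        ‖a u‖ * Real.exp (dotp (intCastVec (u : Fin n → ℤ)) v) ≤ C) → normP σ P a ≤ C := by
    intro a C hC h
    apply Real.sSup_le _ hC
    rintro x ⟨u, v, hv, rfl⟩
    exact h u v hv
  have hnormnonneg : ∀ a ∈ KUP k σ P, 0 ≤ normP σ P a := by
    intro a ha
    obtain ⟨u, v, hv, heq⟩ := (hgr a ha).1
    rw [heq]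
    exact mul_nonneg (norm_nonneg _) (Real.exp_pos _).le
  have hnormzero : normP σ P (0 : ↥(Ssigma σ) → k) = 0 := by
    apply le_antisymm
    · apply hnormle _ 0 le_rfl
      intro u v hv
      simp
    · exact hnormnonneg 0 Stmt12Aux.zero_mem_KUP
  -- domination of points of P by vertices
  have hdom : ∀ (u : ↥(Ssigma σ)) (v : Fin n → ℝ), v ∈ P → ∃ z ∈ vertices P,
      dotp (intCastVec (u : Fin n → ℤ)) v ≤ dotp (intCastVec (u : Fin n → ℤ)) z := by
    intro u v hv
    have hpol : intCastVec (u : Fin n → ℤ) ∈ polarCone σ := u.2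
    exact Stmt12Aux.exists_vertex_dominating hP hσ hpt (intCastVec (u : Fin n → ℤ))
      (fun x hx => hpol x hx) r v hv (Nat.sub_le _ _)
  refine ⟨?_, ?_, ?_⟩
  · -- (a)
    intro a ha b hb
    exact ⟨fun u => Stmt12Aux.summable_conv hna ha hb hv₀P u,
      Stmt12Aux.conv_mem_KUP hna ha hb,
      Stmt12Aux.add_mem_KUP hna ha hb,
      fun c => Stmt12Aux.smul_mem_KUP ha c,
      Stmt12Aux.conv_comm a b,
      fun c hc => ⟨Stmt12Aux.conv_assoc hna ha hb hc hv₀P,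
        Stmt12Aux.conv_add hna ha hb hc hv₀P⟩,
      Stmt12Aux.delta_mem_KUP,
      Stmt12Aux.delta_conv a⟩
  · -- (b)
    intro a ha
    refine ⟨hgr a ha, ⟨?_, ?_⟩, ?_, ?_⟩
    · -- normP a = 0 → a = 0
      intro h0
      funext u
      have hv := hle a ha u w₀ hw₀
      rw [h0] at hv
      have hexp := Real.exp_pos (dotp (intCastVec (u : Fin n → ℤ)) w₀)
      have hnn := norm_nonneg (a u)
      have : ‖a u‖ = 0 := by nlinarith
      simpa using this
    · rintro rfl
      exact hnormzero
    · -- ultrametric and multiplicative bounds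
      intro b hb
      constructor
      · apply hnormle _ _ (le_trans (hnormnonneg a ha) (le_max_left _ _))
        intro u v hv
        have hmax := hna (a u) (b u)
        have hexp := Real.exp_pos (dotp (intCastVec (u : Fin n → ℤ)) v)
        have h1 := hle a ha u v hv
        have h2 := hle b hb u v hv
        have hab : (a + b) u = a u + b u := rfl
        rw [hab]
        rcases max_cases ‖a u‖ ‖b u‖ with ⟨hm, _⟩ | ⟨hm, _⟩
        · have : ‖a u + b u‖ ≤ ‖a u‖ := by rw [← hm]; exact hmax
          have := mul_le_mul_of_nonneg_right this hexp.le
          exact le_trans this (le_trans h1 (le_max_left _ _))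
        · have : ‖a u + b u‖ ≤ ‖b u‖ := by rw [← hm]; exact hmax
          have := mul_le_mul_of_nonneg_right this hexp.le
          exact le_trans this (le_trans h2 (le_max_right _ _))
      · apply hnormle _ _ (mul_nonneg (hnormnonneg a ha) (hnormnonneg b hb))
        intro u v hv
        have hvP : v ∈ P := Stmt12Aux.vertices_subset hv
        have := Stmt12Aux.conv_val_le hna ha hb hvP u
          (mul_nonneg (hnormnonneg a ha) (hnormnonneg b hb))
          (fun q => mul_le_mul (hle a ha _ v hv) (hle b hb _ v hv)
            (mul_nonneg (norm_nonneg _) (Stmt12Aux.expw_pos _ v).le) (hnormnonneg a ha))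
        exact this
    · -- scalar multiplication
      intro c
      by_cases hc : c = 0
      · subst hc
        have : (0 : k) • a = (0 : ↥(Ssigma σ) → k) := by
          funext u; simp
        rw [this, hnormzero]
        simp
      · have hcpos : 0 < ‖c‖ := norm_pos_iff.mpr hc
        have hmem := Stmt12Aux.smul_mem_KUP ha c
        apply le_antisymm
        · apply hnormle _ _ (mul_nonneg hcpos.le (hnormnonneg a ha))
          intro u v hv
          have h1 := hle a ha u v hv
          have hsm : (c • a) u = c • a u := rfl
          rw [hsm, norm_smul, mul_assoc]
          exact mul_le_mul_of_nonneg_left h1 hcpos.le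
        · have h2 : normP σ P a ≤ ‖c‖⁻¹ * normP σ P (c • a) := by
            apply hnormle _ _ (mul_nonneg (inv_nonneg.mpr hcpos.le) (hnormnonneg _ hmem))
            intro u v hv
            have h1 := hle (c • a) hmem u v hv
            have hsm : (c • a) u = c • a u := rfl
            rw [hsm, norm_smul] at h1
            rw [show ‖a u‖ * Real.exp (dotp (intCastVec (u : Fin n → ℤ)) v) =
              ‖c‖⁻¹ * (‖c‖ * ‖a u‖ * Real.exp (dotp (intCastVec (u : Fin n → ℤ)) v)) by
              field_simp]
            exact mul_le_mul_of_nonneg_left h1 (inv_nonneg.mpr hcpos.le)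
          calc ‖c‖ * normP σ P a ≤ ‖c‖ * (‖c‖⁻¹ * normP σ P (c • a)) :=
                mul_le_mul_of_nonneg_left h2 hcpos.le
            _ = normP σ P (c • a) := by field_simp
  · -- (c) completeness
    intro F hF hCauchy
    have hsubmem : ∀ m m', F m - F m' ∈ KUP k σ P :=
      fun m m' => Stmt12Aux.sub_mem_KUP hna (hF m) (hF m')
    -- pointwise limits
    have hfix : ∀ u : ↥(Ssigma σ), ∃ l : k, Filter.Tendsto (fun m => F m u) Filter.atTop (𝓝 l) := by
      intro u
      apply cauchySeq_tendsto_of_complete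
      rw [Metric.cauchySeq_iff]
      intro ε hε
      set e := Real.exp (dotp (intCastVec (u : Fin n → ℤ)) w₀) with he
      have hepos : 0 < e := Real.exp_pos _
      obtain ⟨N, hN⟩ := hCauchy (ε * e) (mul_pos hε hepos)
      refine ⟨N, fun m hm m' hm' => ?_⟩
      rw [dist_eq_norm]
      have h1 := hle (F m - F m') (hsubmem m m') u w₀ hw₀
      have h2 := hN m hm m' hm'
      have hsub : (F m - F m') u = F m u - F m' u := rfl
      rw [hsub] at h1
      have : ‖F m u - F m' u‖ * e < ε * e := lt_of_le_of_lt h1 h2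
      calc ‖F m u - F m' u‖ = ‖F m u - F m' u‖ * e * e⁻¹ := by field_simp
        _ < ε * e * e⁻¹ := by
            apply mul_lt_mul_of_pos_right this (inv_pos.mpr hepos)
        _ = ε := by field_simp
    choose L hL using hfix
    -- key uniform bound
    have hkey : ∀ (N : ℕ) (ε : ℝ), 0 < ε →
        (∀ m ≥ N, ∀ m' ≥ N, normP σ P (F m - F m') < ε) →
        ∀ m ≥ N, ∀ (u : ↥(Ssigma σ)) (v : Fin n → ℝ), v ∈ vertices P →
          ‖F m u - L u‖ * Real.exp (dotp (intCastVec (u : Fin n → ℤ)) v) ≤ ε := by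
      intro N ε hε hN m hm u v hv
      set e := Real.exp (dotp (intCastVec (u : Fin n → ℤ)) v) with he
      have htend : Filter.Tendsto (fun m' => ‖F m u - F m' u‖ * e) Filter.atTop
          (𝓝 (‖F m u - L u‖ * e)) :=
        (((hL u).const_sub (F m u)).norm.mul_const e)
      apply le_of_tendsto htend
      filter_upwards [Filter.eventually_ge_atTop N] with m' hm'
      have h1 := hle (F m - F m') (hsubmem m m') u v hv
      have hsub : (F m - F m') u = F m u - F m' u := rfl
      rw [hsub] at h1
      exact le_of_lt (lt_of_le_of_lt h1 (hN m hm m' hm'))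
    refine ⟨L, ?_, ?_⟩
    · -- L ∈ KUP
      intro v hvP ε hε
      obtain ⟨N, hN⟩ := hCauchy (ε / 2) (by linarith)
      have hFNL : ∀ u : ↥(Ssigma σ),
          ‖F N u - L u‖ * Real.exp (dotp (intCastVec (u : Fin n → ℤ)) v) ≤ ε / 2 := by
        intro u
        obtain ⟨z, hz, hzle⟩ := hdom u v hvP
        have h1 := hkey N (ε / 2) (by linarith) hN N (le_refl N) u z hz
        have h2 : Real.exp (dotp (intCastVec (u : Fin n → ℤ)) v) ≤
            Real.exp (dotp (intCastVec (u : Fin n → ℤ)) z) := Real.exp_le_exp.mpr hzle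
        calc ‖F N u - L u‖ * Real.exp (dotp (intCastVec (u : Fin n → ℤ)) v) ≤
            ‖F N u - L u‖ * Real.exp (dotp (intCastVec (u : Fin n → ℤ)) z) :=
              mul_le_mul_of_nonneg_left h2 (norm_nonneg _)
          _ ≤ ε / 2 := h1
      apply Set.Finite.subset (hF N v hvP ε hε)
      intro u hu
      simp only [Set.mem_setOf_eq] at hu ⊢
      by_contra hcon
      push_neg at hcon
      have hmax : ‖L u‖ ≤ max ‖F N u‖ ‖L u - F N u‖ := by
        have h := hna (F N u) (L u - F N u)
        rw [show F N u + (L u - F N u) = L u by ring] at h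
        exact h
      have hexp := Real.exp_pos (dotp (intCastVec (u : Fin n → ℤ)) v)
      have hrev : ‖L u - F N u‖ = ‖F N u - L u‖ := norm_sub_rev _ _
      rcases max_cases ‖F N u‖ ‖L u - F N u‖ with ⟨hm, _⟩ | ⟨hm, _⟩
      · rw [hm] at hmax
        have := mul_le_mul_of_nonneg_right hmax hexp.le
        linarith
      · rw [hm, hrev] at hmax
        have := mul_le_mul_of_nonneg_right hmax hexp.le
        have := hFNL u
        linarith
    · -- convergence
      intro ε hε
      obtain ⟨N, hN⟩ := hCauchy (ε / 2) (by linarith)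
      refine ⟨N, fun m hm => ?_⟩
      have hb := hnormle (F m - L) (ε / 2) (by linarith) (fun u v hv => by
        have h1 := hkey N (ε / 2) (by linarith) hN m hm u v hv
        have hsub : (F m - L) u = F m u - L u := rfl
        rw [hsub]
        exact h1)
      linarith

end
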